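/- For the PEG G4 with the single rule E ← E + E / n, which is both left- and right-recursive, in the left-recursive extended semantics with the empty memoization table: G4[E] applied to the subject n+n+n yields (ε, E[E[n]+E[E[n]+E[n]]]), i.e., the + operator associates to the right. -/
import Mathlib


/-- Parsing expressions over non-terminals `N` and terminals `T`. -/
inductive PExp (N T : Type) : Type where
  | empty : PExp N T
  | term : T → PExp N T
  | var : N → PExp N T
  | seq : PExp N T → PExp N T → PExp N T
  | choice : PExp N T → PExp N T → PExp N T
  | star : PExp N T → PExp N T
  | nott : PExp N T → PExp N T

/-- A PEG: a rule for every non-terminal and a starting expression.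
(A PEG whose `prod` is a total function is a closed PEG.) -/
structure PEG (N T : Type) where
  prod : N → PExp N T
  start : PExp N T

/-- Symbols of parse strings: terminals and tagged brackets `A[...]`. -/
inductive PSym (N T : Type) : Type where
  | t : T → PSym N T
  | node : N → List (PSym N T) → PSym N T

/-- Parse strings. -/
abbrev PStr (N T : Type) := List (PSym N T)

/-- Result of a match: `fail`, or a pair (remaining suffix, parse string). -/
inductive Res (N T : Type) : Type where
  | fail : Res N T
  | ok : List T → PStr N T → Res N T
/-- Memoization tables: partial functions from (non-terminal, subject) to results. -/
abbrev Memo (N T : Type) := N → List T → Option (Res N T)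

/-- `L[(A,s) ↦ r]`. -/
def Memo.update {N T : Type} [DecidableEq N] [DecidableEq T]
    (L : Memo N T) (A : N) (s : List T) (r : Res N T) : Memo N T :=
  fun B u => if B = A ∧ u = s then some r else L B u

/-- The empty memoization table. -/
def Memo.empty {N T : Type} : Memo N T := fun _ _ => none
mutual
/-- The left-recursive extended semantics `G[p] s L ⇝ r`. -/
inductive LMatch {N T : Type} [DecidableEq N] [DecidableEq T] (G : PEG N T) :
    PExp N T → List T → Memo N T → Res N T → Prop where
  | empty1 : LMatch G .empty s L (.ok s [])
  | char1 : LMatch G (.term a) (a :: s) L (.ok s [.t a])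
  | char2 : b ≠ a → LMatch G (.term b) (a :: s) L .fail
  | char3 : LMatch G (.term a) [] L .fail
  | lvar1 : L A s = none →
      LMatch G (G.prod A) s (Memo.update L A s .fail) (.ok s1 t1) →
      Inc G A s (Memo.update L A s (.ok s1 t1)) (.ok s2 t2) →
      LMatch G (.var A) s L (.ok s2 [.node A t2])
  | lvar2 : L A s = none →
      LMatch G (G.prod A) s (Memo.update L A s .fail) .fail →
      LMatch G (.var A) s L .fail
  | lvar3 : L A s = some .fail → LMatch G (.var A) s L .fail
  | lvar4 : L A s = some (.ok y t) → LMatch G (.var A) s L (.ok y [.node A t])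
  | con1 : LMatch G p1 s L (.ok s1 t1) → LMatch G p2 s1 L (.ok s2 t2) →
      LMatch G (.seq p1 p2) s L (.ok s2 (t1 ++ t2))
  | con2 : LMatch G p1 s L (.ok s1 t1) → LMatch G p2 s1 L .fail →
      LMatch G (.seq p1 p2) s L .fail
  | con3 : LMatch G p1 s L .fail → LMatch G (.seq p1 p2) s L .fail
  | ord1 : LMatch G p1 s L (.ok s1 t1) → LMatch G (.choice p1 p2) s L (.ok s1 t1)
  | ord2 : LMatch G p1 s L .fail → LMatch G p2 s L .fail →
      LMatch G (.choice p1 p2) s L .fail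
  | ord3 : LMatch G p1 s L .fail → LMatch G p2 s L (.ok s1 t1) →
      LMatch G (.choice p1 p2) s L (.ok s1 t1)
  | not1 : LMatch G p s L .fail → LMatch G (.nott p) s L (.ok s [])
  | not2 : LMatch G p s L (.ok s1 t1) → LMatch G (.nott p) s L .fail
  | rep1 : LMatch G p s L .fail → LMatch G (.star p) s L (.ok s [])
  | rep2 : LMatch G p s L (.ok s1 t1) → LMatch G (.star p) s1 L (.ok s2 t2) →
      LMatch G (.star p) s L (.ok s2 (t1 ++ t2))

/-- The auxiliary bound-increasing relation `G[P(A)] s L ⇝INC r`. -/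
inductive Inc {N T : Type} [DecidableEq N] [DecidableEq T] (G : PEG N T) :
    N → List T → Memo N T → Res N T → Prop where
  | inc1 : y ≠ [] →
      LMatch G (G.prod A) (x ++ y ++ z ++ w)
        (Memo.update L A (x ++ y ++ z ++ w) (.ok (y ++ z ++ w) t1)) (.ok (z ++ w) t2) →
      Inc G A (x ++ y ++ z ++ w)
        (Memo.update L A (x ++ y ++ z ++ w) (.ok (z ++ w) t2)) (.ok w t3) →
      Inc G A (x ++ y ++ z ++ w)
        (Memo.update L A (x ++ y ++ z ++ w) (.ok (y ++ z ++ w) t1)) (.ok w t3)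
  | inc2 : L A s = some r → LMatch G (G.prod A) s L .fail → Inc G A s L r
  | inc3 :
      LMatch G (G.prod A) (x ++ y ++ z)
        (Memo.update L A (x ++ y ++ z) (.ok z t1)) (.ok (y ++ z) t2) →
      Inc G A (x ++ y ++ z)
        (Memo.update L A (x ++ y ++ z) (.ok z t1)) (.ok z t1)
end

/-- The alphabet `{n, +}`. -/
inductive T4 : Type where
  | n : T4
  | plus : T4
deriving DecidableEq

/-- The PEG `E ← E + E / n` (single non-terminal `E`, modelled by `Unit`),
which is both left- and right-recursive. -/
def G4 : PEG Unit T4 where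
  prod := fun _ => PExp.choice
    (PExp.seq (PExp.seq (PExp.var ()) (PExp.term T4.plus)) (PExp.var ()))
    (PExp.term T4.n)
  start := PExp.var ()

/-- The parse string `E[n]`. -/
def E4n : PSym Unit T4 := PSym.node () [PSym.t T4.n]


namespace G4Proof

abbrev S5 : List T4 := [T4.n, T4.plus, T4.n, T4.plus, T4.n]
abbrev S3 : List T4 := [T4.n, T4.plus, T4.n]
abbrev S1 : List T4 := [T4.n]
abbrev R4 : List T4 := [T4.plus, T4.n, T4.plus, T4.n]
abbrev R2 : List T4 := [T4.plus, T4.n]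
abbrev TN : PStr Unit T4 := [PSym.t T4.n]
abbrev T3 : PStr Unit T4 := [E4n, PSym.t T4.plus, E4n]
abbrev TT : PStr Unit T4 := [E4n, PSym.t T4.plus, PSym.node () T3]

abbrev L2 : Memo Unit T4 := Memo.update Memo.empty () S5 (.ok R4 TN)
abbrev L4 : Memo Unit T4 := Memo.update L2 () S3 (.ok R2 TN)
abbrev L6 : Memo Unit T4 := Memo.update L4 () S1 (.ok [] TN)
abbrev L7 : Memo Unit T4 := Memo.update L2 () S3 (.ok [] T3)
abbrev L9 : Memo Unit T4 := Memo.update Memo.empty () S5 (.ok [] TT)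

-- E on [n] under L6: parse stays at the seed (inc3)
lemma m_s1_L6 : LMatch G4 (G4.prod ()) S1 L6 (.ok [] TN) :=
  .ord3 (.con3 (.con2 (.lvar4 rfl) .char3)) .char1

lemma inc_s1 : Inc G4 () S1 L6 (.ok [] TN) :=
  Inc.inc3 (x := S1) (y := []) (z := []) (L := L4) m_s1_L6

lemma e_s1 : LMatch G4 (.var ()) S1 L4 (.ok [] [E4n]) :=
  .lvar1 rfl (.ord3 (.con3 (.con3 (.lvar3 rfl))) .char1) inc_s1

-- growth for subject [n,+,n] under L2
lemma m_s3_L4 : LMatch G4 (G4.prod ()) S3 L4 (.ok [] T3) :=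
  .ord1 (.con1 (.con1 (.lvar4 rfl) .char1) e_s1)

lemma m_s3_L7 : LMatch G4 (G4.prod ()) S3 L7 (.ok R2 TN) :=
  .ord3 (.con3 (.con2 (.lvar4 rfl) .char3)) .char1

lemma inc3_s3 : Inc G4 () S3 L7 (.ok [] T3) :=
  Inc.inc3 (x := [T4.n]) (y := [T4.plus, T4.n]) (z := []) (L := L2) m_s3_L7

lemma inc_s3 : Inc G4 () S3 L4 (.ok [] T3) :=
  Inc.inc1 (x := [T4.n]) (y := [T4.plus, T4.n]) (z := []) (w := []) (L := L2)
    (by simp) m_s3_L4 inc3_s3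

lemma e_s3 : LMatch G4 (.var ()) S3 L2 (.ok [] [PSym.node () T3]) :=
  .lvar1 rfl (.ord3 (.con3 (.con3 (.lvar3 rfl))) .char1) inc_s3

-- growth for the full subject under L2
lemma m_s5_L2 : LMatch G4 (G4.prod ()) S5 L2 (.ok [] TT) :=
  .ord1 (.con1 (.con1 (.lvar4 rfl) .char1) e_s3)

lemma m_s5_L9 : LMatch G4 (G4.prod ()) S5 L9 (.ok R4 TN) :=
  .ord3 (.con3 (.con2 (.lvar4 rfl) .char3)) .char1

lemma inc3_s5 : Inc G4 () S5 L9 (.ok [] TT) :=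
  Inc.inc3 (x := [T4.n]) (y := R4) (z := []) (L := Memo.empty) m_s5_L9

lemma inc_s5 : Inc G4 () S5 L2 (.ok [] TT) :=
  Inc.inc1 (x := [T4.n]) (y := R4) (z := []) (w := []) (L := Memo.empty)
    (by simp) m_s5_L2 inc3_s5

end G4Proof

/-- Matching `E` against `n+n+n` with the empty memoization table consumes the
whole subject and yields `E[E[n]+E[E[n]+E[n]]]`: `+` is right-associative. -/
theorem G4_right_assoc :
    LMatch G4 (PExp.var ()) [T4.n, T4.plus, T4.n, T4.plus, T4.n] Memo.empty
      (Res.ok []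
        [PSym.node ()
          [E4n, PSym.t T4.plus,
           PSym.node () [E4n, PSym.t T4.plus, E4n]]]) :=
  .lvar1 rfl (.ord3 (.con3 (.con3 (.lvar3 rfl))) .char1) G4Proof.inc_s5
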